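/- Let (A, B, C) be a recollement of abelian categories with enough projectives such that i* is exact and j* preserves projectives. Let X' and X'' be resolving subcategories of A and C, and set X := {B ∈ B : i*(B) ∈ X' and j*(B) ∈ X''}. Then X-res B = max{X'-res A, X''-res C}, i.e., the X-resolution dimension of B equals the maximum of the X'-resolution dimension of A and the X''-resolution dimension of C. -/

import Mathlib

open CategoryTheory CategoryTheory.Limits

attribute [local instance] Abelian.hasFiniteBiproducts
open ZeroObject

universe v₁ v₂ v₃ u₁ u₂ u₃

/-- A recollement of abelian categories. -/
structure Recollement (A : Type u₁) (B : Type u₂) (C : Type u₃)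
    [Category.{v₁} A] [Category.{v₂} B] [Category.{v₃} C]
    [Abelian A] [Abelian B] [Abelian C] where
  /-- the functor `i^*` -/
  iStar : B ⥤ A
  /-- the functor `i_*` -/
  iLower : A ⥤ B
  /-- the functor `i^!` -/
  iShriek : B ⥤ A
  /-- the functor `j_!` -/
  jLower : C ⥤ B
  /-- the functor `j^*` -/
  jStar : B ⥤ C
  /-- the functor `j_*` -/
  jUpper : C ⥤ B
  adj₁ : iStar ⊣ iLower
  adj₂ : iLower ⊣ iShriek
  adj₃ : jLower ⊣ jStar
  adj₄ : jStar ⊣ jUpper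
  iLower_preservesFiniteLimits : PreservesFiniteLimits iLower
  iLower_preservesFiniteColimits : PreservesFiniteColimits iLower
  jStar_preservesFiniteLimits : PreservesFiniteLimits jStar
  jStar_preservesFiniteColimits : PreservesFiniteColimits jStar
  iStar_preservesFiniteColimits : PreservesFiniteColimits iStar
  iShriek_preservesFiniteLimits : PreservesFiniteLimits iShriek
  jLower_preservesFiniteColimits : PreservesFiniteColimits jLower
  jUpper_preservesFiniteLimits : PreservesFiniteLimits jUpper
  iLower_full : iLower.Full
  iLower_faithful : iLower.Faithful
  jLower_full : jLower.Full
  jLower_faithful : jLower.Faithful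
  jUpper_full : jUpper.Full
  jUpper_faithful : jUpper.Faithful
  im_eq_ker : ∀ b : B, IsZero (jStar.obj b) ↔ ∃ a : A, Nonempty (iLower.obj a ≅ b)

variable {A : Type u₁} [Category.{v₁} A] [Abelian A]

/-- A resolving subcategory: contains the projectives, closed under extensions
and under kernels of epimorphisms (given by short exact sequences). -/
structure IsResolving (X : Set A) : Prop where
  projective_mem : ∀ P : A, Projective P → P ∈ X
  ext_closed : ∀ S : ShortComplex A, S.ShortExact → S.X₁ ∈ X → S.X₃ ∈ X → S.X₂ ∈ X
  ker_epi_closed : ∀ S : ShortComplex A, S.ShortExact → S.X₂ ∈ X → S.X₃ ∈ X → S.X₁ ∈ X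

/-- `ResLE X M n` : there is an exact sequence `0 → X_n → ⋯ → X_0 → M → 0`
with all `X_i ∈ X`. -/
inductive ResLE (X : Set A) : A → ℕ → Prop
  | zero {M X₀ : A} (e : X₀ ≅ M) (hX₀ : X₀ ∈ X) : ResLE X M 0
  | succ {M K X₀ : A} {n : ℕ} (f : K ⟶ X₀) (g : X₀ ⟶ M) (w : f ≫ g = 0)
      (hse : (ShortComplex.mk f g w).ShortExact) (hX₀ : X₀ ∈ X)
      (hK : ResLE X K n) : ResLE X M (n + 1)

/-- The `X`-resolution dimension of an object `M` (`⊤` if there is no finite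
`X`-resolution). -/
noncomputable def resDim (X : Set A) (M : A) : ℕ∞ :=
  sInf {n : ℕ∞ | ∃ m : ℕ, ResLE X M m ∧ n = (m : ℕ∞)}

/-- The `X`-resolution dimension of the whole category. -/
noncomputable def resDimCat (X : Set A) : ℕ∞ :=
  ⨆ M : A, resDim X M

/-- The closure of a class of objects under finite direct sums and direct summands. -/
def addClosure (D : Set A) : Set A :=
  {a | ∃ (n : ℕ) (f : Fin n → A), (∀ i, f i ∈ D) ∧
    ∃ (s : a ⟶ ⨁ f) (r : ⨁ f ⟶ a), s ≫ r = 𝟙 a}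

section AuxLemmas

variable {X : Set A}

lemma shortExact_kernel' {Y M : A} (g : Y ⟶ M) [Epi g] :
    (ShortComplex.mk (kernel.ι g) g (kernel.condition g)).ShortExact where
  exact := ShortComplex.exact_kernel g
  mono_f := inferInstance
  epi_g := ‹_›

lemma shortExact_comp_ker {Y P N : A} (a : Y ⟶ P) (b : P ⟶ N) [Epi a] [Epi b] :
    (ShortComplex.mk
      (kernel.lift (a ≫ b) (kernel.ι a)
        (by rw [← Category.assoc, kernel.condition, zero_comp]))
      (kernel.lift b (kernel.ι (a ≫ b) ≫ a)
        (by rw [Category.assoc, kernel.condition]))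
      (by rw [← cancel_mono (kernel.ι b)]; simp)).ShortExact := by
  have hmono : Mono (kernel.lift (a ≫ b) (kernel.ι a)
      (by rw [← Category.assoc, kernel.condition, zero_comp])) :=
    mono_of_mono_fac (kernel.lift_ι _ _ _)
  have hepi : Epi (kernel.lift b (kernel.ι (a ≫ b) ≫ a)
      (by rw [Category.assoc, kernel.condition])) := by
    set q : pullback a (kernel.ι b) ⟶ kernel (a ≫ b) :=
      kernel.lift (a ≫ b) (pullback.fst a (kernel.ι b))
        (by rw [← Category.assoc, pullback.condition, Category.assoc,
          kernel.condition, comp_zero]) with hq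
    have h : q ≫ kernel.lift b (kernel.ι (a ≫ b) ≫ a)
        (by rw [Category.assoc, kernel.condition]) = pullback.snd a (kernel.ι b) := by
      rw [← cancel_mono (kernel.ι b)]
      simp [hq, pullback.condition]
    have : Epi (q ≫ kernel.lift b (kernel.ι (a ≫ b) ≫ a)
        (by rw [Category.assoc, kernel.condition])) := by
      rw [h]; infer_instance
    exact epi_of_epi q _
  refine { exact := ?_, mono_f := hmono, epi_g := hepi }
  apply ShortComplex.exact_of_f_is_kernel
  refine KernelFork.IsLimit.ofι _ _
    (fun {T} x hx => kernel.lift a (x ≫ kernel.ι (a ≫ b)) ?_) (fun {T} x hx => ?_)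
    (fun {T} x hx m hm => ?_)
  · have := hx =≫ kernel.ι b
    simpa using this
  · apply equalizer.hom_ext
    simp
  · apply equalizer.hom_ext
    have := hm =≫ kernel.ι (a ≫ b)
    dsimp at this ⊢
    simpa using this

lemma shortExact_pullback_fst {X₀ X₀' M : A} (g : X₀ ⟶ M) (g' : X₀' ⟶ M) [Epi g] [Epi g'] :
    (ShortComplex.mk
      (pullback.lift (f := g) (g := g') 0 (kernel.ι g') (by simp))
      (pullback.fst g g') (by rw [pullback.lift_fst])).ShortExact := by
  have hmono : Mono (pullback.lift (f := g) (g := g') 0 (kernel.ι g') (by simp)) :=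
    mono_of_mono_fac (pullback.lift_snd _ _ _)
  have hepi : Epi (pullback.fst g g') := inferInstance
  refine { exact := ?_, mono_f := hmono, epi_g := hepi }
  apply ShortComplex.exact_of_f_is_kernel
  refine KernelFork.IsLimit.ofι _ _
    (fun {T} x hx => kernel.lift g' (x ≫ pullback.snd g g') ?_) (fun {T} x hx => ?_)
    (fun {T} x hx m hm => ?_)
  · rw [Category.assoc, ← pullback.condition, ← Category.assoc, hx, zero_comp]
  · dsimp
    apply pullback.hom_ext
    · rw [Category.assoc]; refine (whisker_eq _ (pullback.lift_fst _ _ _)).trans ?_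
      rw [comp_zero]; exact hx.symm
    · rw [Category.assoc]; refine (whisker_eq _ (pullback.lift_snd _ _ _)).trans ?_
      exact kernel.lift_ι _ _ _
  · apply equalizer.hom_ext
    have := hm =≫ pullback.snd g g'
    dsimp at this ⊢
    rw [Category.assoc] at this
    have := (whisker_eq m (pullback.lift_snd _ _ _)).symm.trans this
    simpa using this

lemma shortExact_pullback_snd {X₀ X₀' M : A} (g : X₀ ⟶ M) (g' : X₀' ⟶ M) [Epi g] [Epi g'] :
    (ShortComplex.mk
      (pullback.lift (f := g) (g := g') (kernel.ι g) 0 (by simp))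
      (pullback.snd g g') (by rw [pullback.lift_snd])).ShortExact := by
  have hmono : Mono (pullback.lift (f := g) (g := g') (kernel.ι g) 0 (by simp)) :=
    mono_of_mono_fac (pullback.lift_fst _ _ _)
  have hepi : Epi (pullback.snd g g') := inferInstance
  refine { exact := ?_, mono_f := hmono, epi_g := hepi }
  apply ShortComplex.exact_of_f_is_kernel
  refine KernelFork.IsLimit.ofι _ _
    (fun {T} x hx => kernel.lift g (x ≫ pullback.fst g g') ?_) (fun {T} x hx => ?_)
    (fun {T} x hx m hm => ?_)
  · rw [Category.assoc, pullback.condition, ← Category.assoc, hx, zero_comp]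
  · dsimp
    apply pullback.hom_ext
    · rw [Category.assoc]; refine (whisker_eq _ (pullback.lift_fst _ _ _)).trans ?_
      exact kernel.lift_ι _ _ _
    · rw [Category.assoc]; refine (whisker_eq _ (pullback.lift_snd _ _ _)).trans ?_
      rw [comp_zero]; exact hx.symm
  · apply equalizer.hom_ext
    have := hm =≫ pullback.fst g g'
    dsimp at this ⊢
    rw [Category.assoc] at this
    have := (whisker_eq m (pullback.lift_fst _ _ _)).symm.trans this
    simpa using this


lemma shortExact_of_iso_hom {X₀ M : A} (e : X₀ ≅ M) :
    (ShortComplex.mk (0 : (0 : A) ⟶ X₀) e.hom zero_comp).ShortExact := by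
  have hm : Mono (0 : (0 : A) ⟶ X₀) :=
    ⟨fun {Z} u v _ => (isZero_zero A).eq_of_tgt u v⟩
  refine { exact := ?_, mono_f := hm, epi_g := inferInstance }
  exact (ShortComplex.exact_iff_mono _ rfl).2 inferInstance

variable {X : Set A}

lemma IsResolving.zero_mem (hX : IsResolving X) : (0 : A) ∈ X :=
  hX.projective_mem 0 inferInstance

lemma IsResolving.mem_of_iso (hX : IsResolving X) {M N : A} (e : M ≅ N) (hM : M ∈ X) : N ∈ X :=
  hX.ext_closed _ (shortExact_of_iso_hom e.symm) hX.zero_mem hM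

lemma ResLE.of_iso {M N : A} (e : M ≅ N) {n : ℕ} (h : ResLE X M n) : ResLE X N n := by
  cases h with
  | zero e' h' => exact .zero (e'.trans e) h'
  | succ f g w hse h' hK =>
    have w' : f ≫ (g ≫ e.hom) = 0 := by rw [← Category.assoc, w, zero_comp]
    have hse' : (ShortComplex.mk f (g ≫ e.hom) w').ShortExact :=
      ShortComplex.shortExact_of_iso
        (ShortComplex.isoMk (S₁ := ShortComplex.mk f g w) (Iso.refl _) (Iso.refl _) e
          (by simp) (by simp)) hse
    exact .succ f (g ≫ e.hom) w' hse' h' hK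

lemma ResLE.pad (hX : IsResolving X) {M : A} {n : ℕ} (h : ResLE X M n) : ResLE X M (n + 1) := by
  induction h with
  | zero e h' =>
    exact .succ (0 : (0 : A) ⟶ _) e.hom zero_comp (shortExact_of_iso_hom e) h'
      (.zero (Iso.refl 0) hX.zero_mem)
  | succ f g w hse h' hK ih => exact .succ f g w hse h' ih

lemma ResLE.mono (hX : IsResolving X) {M : A} {m n : ℕ} (hmn : m ≤ n) (h : ResLE X M m) :
    ResLE X M n := by
  induction hmn with
  | refl => exact h
  | step _ ih => exact ih.pad hX

lemma biprod_mem (hX : IsResolving X) {Y P : A} (hY : Y ∈ X) (hP : P ∈ X) : (Y ⊞ P) ∈ X := by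
  have spl : (ShortComplex.mk (biprod.inl : Y ⟶ Y ⊞ P) biprod.snd biprod.inl_snd).Splitting :=
    { r := biprod.fst, s := biprod.inr, f_r := by simp, s_g := by simp, id := by simp }
  exact hX.ext_closed _ spl.shortExact hY hP

lemma ResLE.biprod (hX : IsResolving X) {M P : A} {n : ℕ} (hP : P ∈ X) (h : ResLE X M n) :
    ResLE X (M ⊞ P) n := by
  cases h with
  | zero e h' => exact .zero (biprod.mapIso e (Iso.refl P)) (biprod_mem hX h' hP)
  | succ f g w hse h' hK =>
    have := hse.mono_f
    have := hse.epi_g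
    have w' : (f ≫ biprod.inl) ≫ biprod.map g (𝟙 P) = 0 := by
      rw [Category.assoc, biprod.inl_map, ← Category.assoc, w, zero_comp]
    have hepi : Epi (biprod.map g (𝟙 P)) := by
      refine ⟨fun {Z} u v huv => biprod.hom_ext' u v ?_ ?_⟩
      · have h1 := biprod.inl ≫= huv
        rw [← Category.assoc, ← Category.assoc, biprod.inl_map] at h1
        rw [Category.assoc, Category.assoc] at h1
        exact (cancel_epi g).1 h1
      · have h2 := biprod.inr ≫= huv
        rw [← Category.assoc, ← Category.assoc, biprod.inr_map] at h2
        simpa using h2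
    have hse' : (ShortComplex.mk (f ≫ biprod.inl) (biprod.map g (𝟙 P)) w').ShortExact := by
      refine { exact := ?_, mono_f := mono_comp _ _, epi_g := hepi }
      apply ShortComplex.exact_of_f_is_kernel
      refine KernelFork.IsLimit.ofι _ _
        (fun {T} x hx => hse.exact.lift (x ≫ biprod.fst) ?_) (fun {T} x hx => ?_)
        (fun {T} x hx m hm => ?_)
      · have := hx =≫ biprod.fst
        dsimp at this
        rw [Category.assoc, biprod.map_fst, zero_comp, ← Category.assoc] at this
        exact this
      · dsimp
        apply biprod.hom_ext
        · simpa using hse.exact.lift_f (x ≫ biprod.fst) _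
        · have := hx =≫ biprod.snd
          dsimp at this
          rw [Category.assoc, biprod.map_snd, zero_comp] at this
          simpa using this.symm
      · rw [← cancel_mono (ShortComplex.mk f g w).f]
        refine Eq.trans ?_ (hse.exact.lift_f (x ≫ biprod.fst) _).symm
        have := hm =≫ biprod.fst
        dsimp at this
        simpa using this
    exact .succ (f ≫ biprod.inl) (biprod.map g (𝟙 P)) w' hse' (biprod_mem hX h' hP) hK

lemma kquot (hX : IsResolving X) {L Q N : A} {n : ℕ} (f : L ⟶ Q) (g : Q ⟶ N)
    (w : f ≫ g = 0) (hse : (ShortComplex.mk f g w).ShortExact) (hN : N ∈ X)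
    (h : ResLE X Q n) : ResLE X L n := by
  have := hse.mono_f
  have := hse.epi_g
  have eL : kernel g ≅ L :=
    IsLimit.conePointUniqueUpToIso (kernelIsKernel g) hse.fIsKernel
  cases h with
  | zero e h' =>
    have hQ : Q ∈ X := hX.mem_of_iso e h'
    exact .zero (Iso.refl L) (hX.ker_epi_closed _ hse hQ hN)
  | succ f' g' w' hse' h' hK =>
    have := hse'.mono_f
    have := hse'.epi_g
    -- W := kernel (g' ≫ g), SES 0 → W → Y → N → 0
    have hWmem : kernel (g' ≫ g) ∈ X :=
      hX.ker_epi_closed _ (shortExact_kernel' (g' ≫ g)) h' hN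
    -- SES 0 → kernel g' → W → kernel g → 0
    have hses := shortExact_comp_ker g' g
    have eK := IsLimit.conePointUniqueUpToIso hse'.fIsKernel (kernelIsKernel g')
    have hK' := hK.of_iso eK
    exact (ResLE.succ _ _ _ hses hWmem hK').of_iso eL

lemma kshiftP (hX : IsResolving X) {M L P : A} {n : ℕ} (f : L ⟶ P) (g : P ⟶ M)
    (w : f ≫ g = 0) (hse : (ShortComplex.mk f g w).ShortExact) (hP : Projective P)
    (h : ResLE X M (n + 1)) : ResLE X L n := by
  have := hse.mono_f
  have := hse.epi_g
  cases h with
  | succ f' g' w' hse' hX₀ hK' =>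
    have := hse'.mono_f
    have := hse'.epi_g
    -- Q := pullback g g'
    have hsesA := shortExact_pullback_fst g g'
    have hsesB := shortExact_pullback_snd g g'
    -- splitting of hsesA via projectivity of P
    have hfst : Epi (pullback.fst g g') := inferInstance
    have spl := ShortComplex.Splitting.ofExactOfSection _ hsesA.exact
      (Projective.factorThru (𝟙 P) (pullback.fst g g'))
      (Projective.factorThru_comp _ _) hsesA.mono_f
    have eQ := spl.isoBinaryBiproduct
    -- kernel g' ≅ K'
    have eK' := IsLimit.conePointUniqueUpToIso hse'.fIsKernel (kernelIsKernel g')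
    have h1 : ResLE X (kernel g') n := hK'.of_iso eK'
    have h2 : ResLE X (pullback g g') n :=
      (h1.biprod hX (hX.projective_mem P hP)).of_iso eQ.symm
    have h3 : ResLE X (kernel g) n := kquot hX _ _ _ hsesB hX₀ h2
    have eL := IsLimit.conePointUniqueUpToIso (kernelIsKernel g) hse.fIsKernel
    exact h3.of_iso eL

inductive ProjChain : A → A → ℕ → Prop
  | zero {M K : A} (e : K ≅ M) : ProjChain M K 0
  | succ {M K P K₁ : A} {n : ℕ} (f : K₁ ⟶ P) (g : P ⟶ M) (w : f ≫ g = 0)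
      (hse : (ShortComplex.mk f g w).ShortExact) (hP : Projective P)
      (hc : ProjChain K₁ K n) : ProjChain M K (n + 1)

lemma existsProjChain [EnoughProjectives A] (n : ℕ) (M : A) : ∃ K : A, ProjChain M K n := by
  induction n generalizing M with
  | zero => exact ⟨M, .zero (Iso.refl M)⟩
  | succ n ih =>
    obtain ⟨K, hc⟩ := ih (kernel (Projective.π M))
    exact ⟨K, .succ _ _ _ (shortExact_kernel' (Projective.π M)) inferInstance hc⟩

lemma syzMem (hX : IsResolving X) {n : ℕ} {M K : A} (h : ResLE X M n)
    (hc : ProjChain M K n) : K ∈ X := by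
  induction n generalizing M K with
  | zero =>
    cases hc with | zero e =>
    cases h with | zero e' h' =>
    exact hX.mem_of_iso e.symm (hX.mem_of_iso e' h')
  | succ n ih =>
    cases hc with | succ f g w hse hP hc' =>
    exact ih (kshiftP hX f g w hse hP h) hc'

lemma ProjChain.resLE (hproj : ∀ P : A, Projective P → P ∈ X) {n : ℕ} {M K : A}
    (hc : ProjChain M K n) (hK : K ∈ X) : ResLE X M n := by
  induction hc with
  | zero e => exact .zero e hK
  | succ f g w hse hP hc ih => exact .succ f g w hse (hproj _ hP) (ih hK)


lemma ResLE.map {D : Type u₂} [Category.{v₂} D] [Abelian D] (F : A ⥤ D)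
    [PreservesFiniteLimits F] [PreservesFiniteColimits F]
    {X' : Set D} (hF : ∀ a ∈ X, F.obj a ∈ X') {M : A} {n : ℕ}
    (h : ResLE X M n) : ResLE X' (F.obj M) n := by
  induction h with
  | zero e h' => exact .zero (F.mapIso e) (hF _ h')
  | succ f g w hse h' hK ih =>
    have w' : F.map f ≫ F.map g = 0 := by rw [← F.map_comp, w, F.map_zero]
    have hse' : (ShortComplex.mk (F.map f) (F.map g) w').ShortExact :=
      hse.map_of_exact F
    exact .succ _ _ w' hse' (hF _ h') ih

lemma ProjChain.map {D : Type u₂} [Category.{v₂} D] [Abelian D] (F : A ⥤ D)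
    [PreservesFiniteLimits F] [PreservesFiniteColimits F]
    (hF : ∀ a : A, Projective a → Projective (F.obj a)) {M K : A} {n : ℕ}
    (h : ProjChain M K n) : ProjChain (F.obj M) (F.obj K) n := by
  induction h with
  | zero e => exact .zero (F.mapIso e)
  | succ f g w hse hP hc ih =>
    have w' : F.map f ≫ F.map g = 0 := by rw [← F.map_comp, w, F.map_zero]
    have hse' : (ShortComplex.mk (F.map f) (F.map g) w').ShortExact :=
      hse.map_of_exact F
    exact .succ _ _ w' hse' (hF _ hP) ih

lemma resDim_le_of_resLE {M : A} {n : ℕ} (h : ResLE X M n) : resDim X M ≤ n :=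
  sInf_le ⟨n, h, rfl⟩

lemma resLE_of_resDim_le (hX : IsResolving X) {M : A} {n : ℕ} (h : resDim X M ≤ n) :
    ResLE X M n := by
  by_contra hc
  have hge : (n : ℕ∞) + 1 ≤ resDim X M := by
    apply le_sInf
    rintro s ⟨m, hm, rfl⟩
    rcases le_or_gt ((n : ℕ∞) + 1) (m : ℕ∞) with h1 | h1
    · exact h1
    · exfalso
      have hmn : m ≤ n := by
        have h2 : (m : ℕ∞) < ((n + 1 : ℕ) : ℕ∞) := by push_cast; exact h1
        have := Nat.cast_lt.mp h2
        omega
      exact hc (hm.mono hX hmn)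
  have := hge.trans h
  have : ((n + 1 : ℕ) : ℕ∞) ≤ ((n : ℕ) : ℕ∞) := by push_cast; exact this
  have := Nat.cast_le.mp this
  omega

end AuxLemmas

/-- If `i*` is exact and `j*` preserves projectives, then for resolving subcategories
`X'` of `A` and `X''` of `C` and the glued resolving subcategory `X` of `B`, one has
`X`-res `B` = max{`X'`-res `A`, `X''`-res `C`}. -/
theorem resDimCat_glued_eq_max
    (A : Type u₁) (B : Type u₂) (C : Type u₃)
    [Category.{v₁} A] [Category.{v₂} B] [Category.{v₃} C]
    [Abelian A] [Abelian B] [Abelian C]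
    [EnoughProjectives A] [EnoughProjectives B] [EnoughProjectives C]
    (R : Recollement A B C)
    (hi : PreservesFiniteLimits R.iStar)
    (hj : ∀ b : B, Projective b → Projective (R.jStar.obj b))
    (X' : Set A) (X'' : Set C) (hX' : IsResolving X') (hX'' : IsResolving X'')
    (X : Set B) (hXdef : X = {b : B | R.iStar.obj b ∈ X' ∧ R.jStar.obj b ∈ X''}) :
    resDimCat X = max (resDimCat X') (resDimCat X'') := by
  subst hXdef
  have i1 := R.iLower_preservesFiniteColimits
  have i2 := R.iLower_preservesFiniteLimits
  have i3 := R.jStar_preservesFiniteLimits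
  have i4 := R.jStar_preservesFiniteColimits
  have i5 := R.iStar_preservesFiniteColimits
  have i6 := R.jUpper_preservesFiniteLimits
  have i7 := R.iLower_full
  have i8 := R.iLower_faithful
  have i9 := R.jUpper_full
  have i10 := R.jUpper_faithful
  have hiproj : ∀ b : B, Projective b → Projective (R.iStar.obj b) := fun b hb =>
    R.adj₁.map_projective b hb
  have hmemA : ∀ a ∈ {b : B | R.iStar.obj b ∈ X' ∧ R.jStar.obj b ∈ X''},
      R.iStar.obj a ∈ X' := fun a ha => ha.1
  have hmemC : ∀ a ∈ {b : B | R.iStar.obj b ∈ X' ∧ R.jStar.obj b ∈ X''},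
      R.jStar.obj a ∈ X'' := fun a ha => ha.2
  refine le_antisymm ?_ (max_le ?_ ?_)
  · rcases eq_or_ne (max (resDimCat X') (resDimCat X'')) ⊤ with htop | htop
    · rw [htop]; exact le_top
    · obtain ⟨n, hn⟩ := WithTop.ne_top_iff_exists.1 htop
      rw [← hn]
      apply iSup_le
      intro b
      obtain ⟨K, hc⟩ := existsProjChain n b
      have hcA := hc.map R.iStar hiproj
      have hcC := hc.map R.jStar hj
      have hresA : ResLE X' (R.iStar.obj b) n := by
        refine resLE_of_resDim_le hX' ?_
        exact le_trans (le_iSup _ _) (le_trans (le_max_left _ _) hn.ge)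
      have hresC : ResLE X'' (R.jStar.obj b) n := by
        refine resLE_of_resDim_le hX'' ?_
        exact le_trans (le_iSup _ _) (le_trans (le_max_right _ _) hn.ge)
      have hKA : R.iStar.obj K ∈ X' := syzMem hX' hresA hcA
      have hKC : R.jStar.obj K ∈ X'' := syzMem hX'' hresC hcC
      have hproj : ∀ P : B, Projective P →
          P ∈ {b : B | R.iStar.obj b ∈ X' ∧ R.jStar.obj b ∈ X''} := fun P hP =>
        ⟨hX'.projective_mem _ (hiproj P hP), hX''.projective_mem _ (hj P hP)⟩
      exact resDim_le_of_resLE (hc.resLE hproj ⟨hKA, hKC⟩)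
  · apply iSup_le
    intro M
    refine le_trans ?_ (le_iSup _ (R.iLower.obj M))
    apply le_sInf
    rintro s ⟨m, hm, rfl⟩
    have h1 := hm.map R.iStar hmemA
    exact resDim_le_of_resLE (h1.of_iso (asIso (R.adj₁.counit.app M)))
  · apply iSup_le
    intro N
    refine le_trans ?_ (le_iSup _ (R.jUpper.obj N))
    apply le_sInf
    rintro s ⟨m, hm, rfl⟩
    have h1 := hm.map R.jStar hmemC
    exact resDim_le_of_resLE (h1.of_iso (asIso (R.adj₄.counit.app N)))
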